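/- (Theorem 1.) Fix n ≥ 1 and T ≥ 0. Let u : [0,T] → ℝ be continuous and let w : U × [0,T] → ℂ satisfy: w(z,0) = z; for each t, z ↦ w(z,t) is holomorphic on U with |w(z,t)| < 1, w(0,t) = 0, and ∂_z w(z,t) ≠ 0; for each z, t ↦ w(z,t) is differentiable with ∂w/∂t = −w(e^{iu(t)}+w)/(e^{iu(t)}−w); and for each k the k-th Taylor coefficient a_k(t) of w(·,t) at 0 is differentiable in t with derivative equal to the k-th Taylor coefficient of ∂_t w(·,t), and likewise for the Taylor coefficients of z/∂_z w(z,t). Set a(t) = (a_1(t),…,a_n(t)). Let β ∈ ℂ^n and let q : [0,T] → ℂ^n be the differentiable solution of the adjoint system q'(t) = q(t) + 2∑_{s=1}^{n−1} e^{−isu(t)}(s+1)(A(a(t))ᵀ)^s q(t) with terminal condition q(T) = β. Then for all t ∈ [0,T] and all 1 ≤ k ≤ n, q_k(t) = c_{n−k+1}(t), where c_j(t) denotes the j-th Taylor coefficient at 0 of the holomorphic function z ↦ (β_n z + β_{n−1} z² + ⋯ + β_1 z^n) · ∂_z w(z,T) / ∂_z w(z,t). -/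

import Mathlib

open Complex Metric

/-- The `k`-th Taylor coefficient of `f` at `0`. -/
noncomputable def taylorCoeff (f : ℂ → ℂ) (k : ℕ) : ℂ :=
  iteratedDeriv k f 0 / Nat.factorial k

/-- The lower-triangular nilpotent Toeplitz matrix `A(a)` with `A(a)_{j,k} = a_{j-k}`
(1-indexed) for `j > k` and `0` otherwise. -/
noncomputable def toeplitzA {n : ℕ} (a : Fin n → ℂ) : Matrix (Fin n) (Fin n) ℂ :=
  Matrix.of fun j k =>
    if _ : (k : ℕ) < (j : ℕ) then a ⟨(j : ℕ) - (k : ℕ) - 1, by have := j.isLt; omega⟩ else 0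

/-- The Löwner kernel `p(ζ, u) = (e^{iu} + ζ)/(e^{iu} - ζ)`. -/
noncomputable def lkernel (ζ : ℂ) (u : ℝ) : ℂ :=
  (Complex.exp (u * Complex.I) + ζ) / (Complex.exp (u * Complex.I) - ζ)

open Finset

namespace AdjAux

lemma analyticAt_deriv {f : ℂ → ℂ} {x : ℂ} (hf : AnalyticAt ℂ f x) :
    AnalyticAt ℂ (deriv f) x := by
  have := ((ContinuousLinearMap.apply ℂ ℂ (1:ℂ)).analyticAt _).comp hf.fderiv
  convert this using 2
  exact funext fun _ => rfl

lemma ev_diff {f : ℂ → ℂ} (hf : AnalyticAt ℂ f 0) :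
    ∀ᶠ z in nhds (0:ℂ), DifferentiableAt ℂ f z :=
  hf.eventually_analyticAt.mono fun _ hz => hz.differentiableAt

lemma taylorCoeff_congr {f g : ℂ → ℂ} (h : f =ᶠ[nhds 0] g) (k : ℕ) :
    taylorCoeff f k = taylorCoeff g k := by
  unfold taylorCoeff
  rw [h.iteratedDeriv_eq]

lemma taylorCoeff_zero (f : ℂ → ℂ) : taylorCoeff f 0 = f 0 := by
  simp [taylorCoeff]

lemma taylorCoeff_deriv (f : ℂ → ℂ) (j : ℕ) :
    taylorCoeff (deriv f) j = ((j:ℂ)+1) * taylorCoeff f (j+1) := by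
  unfold taylorCoeff
  rw [iteratedDeriv_succ', Nat.factorial_succ]
  have h1 : ((j.factorial : ℂ)) ≠ 0 := Nat.cast_ne_zero.2 j.factorial_ne_zero
  have h2 : (((j+1).factorial : ℂ)) ≠ 0 := Nat.cast_ne_zero.2 (j+1).factorial_ne_zero
  push_cast [Nat.factorial_succ] at h2 ⊢
  field_simp

lemma iteratedDeriv_const' (n : ℕ) (c : ℂ) :
    iteratedDeriv n (fun _ : ℂ => c) = fun _ : ℂ => if n = 0 then c else 0 := by
  induction n generalizing c with
  | zero => simp [iteratedDeriv_zero]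
  | succ n ih =>
    rw [iteratedDeriv_succ']
    have : deriv (fun _ : ℂ => c) = fun _ => (0:ℂ) := by
      funext x; exact deriv_const x c
    rw [this, ih]
    simp

lemma taylorCoeff_const (c : ℂ) (k : ℕ) :
    taylorCoeff (fun _ => c) k = if k = 0 then c else 0 := by
  unfold taylorCoeff
  rw [iteratedDeriv_const']
  split <;> simp_all

end AdjAux

namespace Chunk2
open AdjAux

lemma taylorCoeff_add {f g : ℂ → ℂ} (hf : AnalyticAt ℂ f 0) (hg : AnalyticAt ℂ g 0) (k : ℕ) :
    taylorCoeff (fun z => f z + g z) k = taylorCoeff f k + taylorCoeff g k := by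
  induction k generalizing f g with
  | zero => simp [taylorCoeff_zero]
  | succ k ih =>
    have hd : deriv (fun z => f z + g z) =ᶠ[nhds (0:ℂ)] fun z => deriv f z + deriv g z := by
      filter_upwards [ev_diff hf, ev_diff hg] with z h1 h2
      exact deriv_add h1 h2
    have hk : ((k:ℂ)+1) ≠ 0 := Nat.cast_add_one_ne_zero k
    apply mul_left_cancel₀ hk
    rw [← taylorCoeff_deriv, taylorCoeff_congr hd,
        ih (analyticAt_deriv hf) (analyticAt_deriv hg), mul_add,
        ← taylorCoeff_deriv, ← taylorCoeff_deriv]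

lemma taylorCoeff_const_mul {f : ℂ → ℂ} (hf : AnalyticAt ℂ f 0) (c : ℂ) (k : ℕ) :
    taylorCoeff (fun z => c * f z) k = c * taylorCoeff f k := by
  induction k generalizing f with
  | zero => simp [taylorCoeff_zero]
  | succ k ih =>
    have hd : deriv (fun z => c * f z) =ᶠ[nhds (0:ℂ)] fun z => c * deriv f z := by
      filter_upwards [ev_diff hf] with z h1
      exact deriv_const_mul c h1
    have hk : ((k:ℂ)+1) ≠ 0 := Nat.cast_add_one_ne_zero k
    apply mul_left_cancel₀ hk
    rw [← taylorCoeff_deriv, taylorCoeff_congr hd, ih (analyticAt_deriv hf),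
        taylorCoeff_deriv]
    ring

lemma taylorCoeff_finsum {ι : Type*} (s : Finset ι) (F : ι → ℂ → ℂ)
    (hF : ∀ i ∈ s, AnalyticAt ℂ (F i) 0) (k : ℕ) :
    taylorCoeff (fun z => ∑ i ∈ s, F i z) k = ∑ i ∈ s, taylorCoeff (F i) k := by
  induction s using Finset.cons_induction with
  | empty => simp [taylorCoeff_const]
  | cons i s hi ih =>
    simp only [Finset.sum_cons]
    rw [taylorCoeff_add (hF i (Finset.mem_cons_self i s))
        (s.analyticAt_fun_sum (fun j hj => hF j (Finset.mem_cons_of_mem hj))),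
      ih (fun j hj => hF j (Finset.mem_cons_of_mem hj))]

lemma taylorCoeff_mul {f g : ℂ → ℂ} (hf : AnalyticAt ℂ f 0) (hg : AnalyticAt ℂ g 0) (k : ℕ) :
    taylorCoeff (fun z => f z * g z) k
      = ∑ m ∈ range (k+1), taylorCoeff f m * taylorCoeff g (k - m) := by
  induction k generalizing f g with
  | zero => simp [taylorCoeff_zero]
  | succ k ih =>
    have hf' := analyticAt_deriv hf
    have hg' := analyticAt_deriv hg
    have hd : deriv (fun z => f z * g z) =ᶠ[nhds (0:ℂ)]
        fun z => deriv f z * g z + f z * deriv g z := by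
      filter_upwards [ev_diff hf, ev_diff hg] with z h1 h2
      exact deriv_mul h1 h2
    have hk : ((k:ℂ)+1) ≠ 0 := Nat.cast_add_one_ne_zero k
    apply mul_left_cancel₀ hk
    rw [← taylorCoeff_deriv, taylorCoeff_congr hd,
        taylorCoeff_add (hf'.fun_mul hg) (hf.fun_mul hg'), ih hf' hg, ih hf hg']
    have e1 : ∑ m ∈ range (k+1), taylorCoeff (deriv f) m * taylorCoeff g (k - m)
        = ∑ m ∈ range (k+2), (m:ℂ) * (taylorCoeff f m * taylorCoeff g (k+1-m)) := by
      conv_rhs => rw [Finset.sum_range_succ'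
        (fun m => (m:ℂ) * (taylorCoeff f m * taylorCoeff g (k+1-m))) (k+1)]
      simp only [Nat.cast_zero, zero_mul, add_zero]
      apply Finset.sum_congr rfl
      intro m _
      rw [taylorCoeff_deriv]
      have h1 : k + 1 - (m+1) = k - m := by omega
      rw [h1]
      push_cast
      ring
    have e2 : ∑ m ∈ range (k+1), taylorCoeff f m * taylorCoeff (deriv g) (k - m)
        = ∑ m ∈ range (k+2), ((k+1-m : ℕ):ℂ) * (taylorCoeff f m * taylorCoeff g (k+1-m)) := by
      conv_rhs => rw [Finset.sum_range_succ]
      simp only [Nat.sub_self, Nat.cast_zero, zero_mul, add_zero]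
      apply Finset.sum_congr rfl
      intro m hm
      rw [mem_range] at hm
      rw [taylorCoeff_deriv]
      have h1 : k - m + 1 = k + 1 - m := by omega
      rw [← h1]
      push_cast
      ring
    rw [e1, e2, ← Finset.sum_add_distrib, Finset.mul_sum]
    apply Finset.sum_congr rfl
    intro m hm
    rw [mem_range] at hm
    have h3 : ((k+1-m:ℕ):ℂ) = ((k:ℂ)+1) - (m:ℂ) := by
      have hmk : m ≤ k+1 := by omega
      rw [Nat.cast_sub hmk]
      push_cast
      ring
    rw [h3]
    ring

lemma taylorCoeff_id (k : ℕ) : taylorCoeff (fun z : ℂ => z) k = if k = 1 then 1 else 0 := by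
  match k with
  | 0 => simp [taylorCoeff_zero]
  | 1 =>
    unfold taylorCoeff
    rw [iteratedDeriv_one]
    simp
  | (k+2) =>
    unfold taylorCoeff
    rw [iteratedDeriv_succ']
    have : deriv (fun z : ℂ => z) = fun _ : ℂ => (1:ℂ) := by
      funext x; exact deriv_id x
    rw [this, iteratedDeriv_const']
    simp

lemma taylorCoeff_monomial (m k : ℕ) :
    taylorCoeff (fun z : ℂ => z ^ m) k = if k = m then 1 else 0 := by
  induction m generalizing k with
  | zero =>
    have : (fun z : ℂ => z ^ 0) = fun _ : ℂ => (1:ℂ) := by funext z; simp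
    rw [this, taylorCoeff_const]
  | succ m ih =>
    have : (fun z : ℂ => z ^ (m+1)) = fun z : ℂ => z * z ^ m := by
      funext z; rw [pow_succ']
    rw [this, taylorCoeff_mul (f := fun z : ℂ => z) (g := fun z : ℂ => z ^ m)
      analyticAt_id (analyticAt_id.pow m)]
    simp only [taylorCoeff_id, ih, ite_mul, one_mul, zero_mul]
    rw [Finset.sum_ite_eq' (range (k+1)) 1 (fun a => if k - a = m then (1:ℂ) else 0)]
    rcases k with _ | k
    · simp
    · simp only [mem_range, Nat.lt_add_one_iff, Nat.le_add_left, if_true]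
      have h4 : k + 1 - 1 = k := by omega
      rw [h4]
      by_cases h : k = m
      · simp [h]
      · have : ¬ (k + 1 = m + 1) := by omega
        simp [h, this]

lemma taylorCoeff_pow_eq_zero {f : ℂ → ℂ} (hf : AnalyticAt ℂ f 0) (hf0 : f 0 = 0)
    (s : ℕ) : ∀ m : ℕ, m < s → taylorCoeff (fun z => f z ^ s) m = 0 := by
  induction s with
  | zero => intro m hm; omega
  | succ s ih =>
    intro m hm
    have : (fun z : ℂ => f z ^ (s+1)) = fun z : ℂ => f z * f z ^ s := by
      funext z; rw [pow_succ']
    rw [this, taylorCoeff_mul hf (hf.fun_pow s)]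
    apply Finset.sum_eq_zero
    intro a ha
    rw [mem_range] at ha
    rcases Nat.eq_zero_or_pos a with h | h
    · subst h
      rw [taylorCoeff_zero, hf0]
      ring
    · rw [ih (m - a) (by omega)]
      ring

end Chunk2

namespace Chunk3
open AdjAux Chunk2

lemma kern_expand (e wv : ℂ) (he : e ≠ 0) (hew : e - wv ≠ 0) :
    ∀ j : ℕ, 1 ≤ j →
    (e + wv)/(e - wv) + 2*e*wv/(e - wv)^2
      = 1 + 2*∑ s ∈ Finset.Icc 1 (j-1), ((s:ℂ)+1) * (wv/e)^s
        + (wv/e)^j * (2*(((1 - wv/e)⁻¹)^2 + (j:ℂ)*(1 - wv/e)⁻¹)) := by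
  have h1 : (1:ℂ) - wv/e = (e - wv)/e := by field_simp
  have hy : (1:ℂ) - wv/e ≠ 0 := by rw [h1]; exact div_ne_zero hew he
  intro j hj
  induction j, hj using Nat.le_induction with
  | base =>
    rw [show (1:ℕ)-1 = 0 from rfl, Finset.Icc_eq_empty (by omega)]
    rw [Finset.sum_empty, pow_one]
    rw [h1]
    field_simp
    ring
  | succ j hj ih =>
    rw [ih]
    have hj' : j - 1 + 1 = j := by omega
    rw [show j + 1 - 1 = j from by omega, ← hj',
        Finset.sum_Icc_succ_top (by omega) (fun s : ℕ => ((s:ℂ)+1) * (wv/e)^s), hj']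
    have hrec : (2*(((1 - wv/e)⁻¹)^2 + (j:ℂ)*(1-wv/e)⁻¹))
        = 2*((j:ℂ)+1) + (wv/e)*(2*(((1-wv/e)⁻¹)^2 + ((j:ℂ)+1)*(1-wv/e)⁻¹)) := by
      rw [h1]
      field_simp
      ring
    push_cast
    linear_combination ((wv/e)^j) * hrec

lemma taylorCoeff_pow_mul_eq_zero {f g : ℂ → ℂ} (hf : AnalyticAt ℂ f 0) (hf0 : f 0 = 0)
    (hg : AnalyticAt ℂ g 0) (hg0 : g 0 = 0) (s m : ℕ) (hm : m ≤ s) :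
    taylorCoeff (fun z => f z ^ s * g z) m = 0 := by
  rw [taylorCoeff_mul (hf.fun_pow s) hg]
  apply Finset.sum_eq_zero
  intro a ha
  rw [Finset.mem_range] at ha
  rcases lt_or_ge a s with h | h
  · rw [taylorCoeff_pow_eq_zero hf hf0 s a h]
    ring
  · have ha' : a = s ∧ m = s := by omega
    rw [ha'.2, ← ha'.1, Nat.sub_self, taylorCoeff_zero, hg0]
    ring

lemma key_expand {e : ℂ} (he : ‖e‖ = 1) {f g : ℂ → ℂ}
    (hf : AnalyticAt ℂ f 0) (hf0 : f 0 = 0)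
    (hfb : ∀ᶠ z in nhds (0:ℂ), ‖f z‖ < 1)
    (hg : AnalyticAt ℂ g 0) (hg0 : g 0 = 0) (j : ℕ) (hj : 1 ≤ j) :
    taylorCoeff (fun z => g z * ((e + f z)/(e - f z) + 2*e*(f z)/(e - f z)^2)) j
      = taylorCoeff g j + 2*∑ s ∈ Finset.Icc 1 (j-1),
          ((s:ℂ)+1) * (e⁻¹)^s * taylorCoeff (fun z => f z ^ s * g z) j := by
  have he0 : e ≠ 0 := by
    intro h; rw [h] at he; simp at he
  set ρ : ℂ → ℂ := fun z => 2*(((1 - f z/e)⁻¹)^2 + (j:ℂ)*(1 - f z/e)⁻¹) with hρdef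
  have hρ : AnalyticAt ℂ ρ 0 := by
    have hb : AnalyticAt ℂ (fun z => (1:ℂ) - f z/e) 0 := by
      exact analyticAt_const.sub (hf.div analyticAt_const he0)
    have hb0 : (1:ℂ) - f 0/e ≠ 0 := by rw [hf0]; simp
    have hbi : AnalyticAt ℂ (fun z => ((1:ℂ) - f z/e)⁻¹) 0 := hb.inv hb0
    exact analyticAt_const.mul ((hbi.pow 2).add (analyticAt_const.mul hbi))
  have heq : (fun z => g z * ((e + f z)/(e - f z) + 2*e*(f z)/(e - f z)^2)) =ᶠ[nhds (0:ℂ)]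
      (fun z => g z + ((∑ s ∈ Finset.Icc 1 (j-1), (2*((s:ℂ)+1)*(e⁻¹)^s) * (f z ^ s * g z))
        + (e⁻¹)^j * (f z ^ j * (g z * ρ z)))) := by
    filter_upwards [hfb] with z hz
    have hew : e - f z ≠ 0 := by
      intro h
      rw [sub_eq_zero] at h
      rw [← h, he] at hz
      exact lt_irrefl _ hz
    rw [kern_expand e (f z) he0 hew j hj]
    have hS : ∑ s ∈ Finset.Icc 1 (j-1), (2*((s:ℂ)+1)*(e⁻¹)^s) * (f z ^ s * g z)
        = g z * (2*∑ s ∈ Finset.Icc 1 (j-1), ((s:ℂ)+1) * (f z/e)^s) := by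
      rw [Finset.mul_sum, Finset.mul_sum]
      apply Finset.sum_congr rfl
      intro s _
      rw [div_eq_mul_inv, mul_pow]
      ring
    rw [hS, hρdef]
    simp only []
    ring
  have hsummand : ∀ s ∈ Finset.Icc 1 (j-1),
      AnalyticAt ℂ (fun z => (2*((s:ℂ)+1)*(e⁻¹)^s) * (f z ^ s * g z)) 0 :=
    fun s _ => analyticAt_const.mul ((hf.pow s).mul hg)
  have hsum : AnalyticAt ℂ (fun z => ∑ s ∈ Finset.Icc 1 (j-1),
      (2*((s:ℂ)+1)*(e⁻¹)^s) * (f z ^ s * g z)) 0 :=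
    Finset.analyticAt_fun_sum _ hsummand
  have hlast : AnalyticAt ℂ (fun z => (e⁻¹)^j * (f z ^ j * (g z * ρ z))) 0 :=
    analyticAt_const.mul ((hf.pow j).mul (hg.mul hρ))
  have h3 := taylorCoeff_add (f := g)
      (g := fun z => (∑ s ∈ Finset.Icc 1 (j-1), (2*((s:ℂ)+1)*(e⁻¹)^s) * (f z ^ s * g z))
        + (e⁻¹)^j * (f z ^ j * (g z * ρ z))) hg (by exact hsum.add hlast) j
  have h4 := taylorCoeff_add
      (f := fun z => ∑ s ∈ Finset.Icc 1 (j-1), (2*((s:ℂ)+1)*(e⁻¹)^s) * (f z ^ s * g z))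
      (g := fun z => (e⁻¹)^j * (f z ^ j * (g z * ρ z))) hsum hlast j
  rw [taylorCoeff_congr heq, h3, h4,
      taylorCoeff_finsum _ _ hsummand j, taylorCoeff_const_mul ((hf.fun_pow j).fun_mul (hg.fun_mul hρ)),
      taylorCoeff_pow_mul_eq_zero hf hf0 (hg.fun_mul hρ) (by simp [hg0]) j j le_rfl]
  rw [Finset.mul_sum, mul_zero, add_zero]
  congr 1
  apply Finset.sum_congr rfl
  intro s _
  rw [taylorCoeff_const_mul ((hf.fun_pow s).fun_mul hg)]
  ring

end Chunk3

namespace Chunk4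
open AdjAux Chunk2 Chunk3

lemma toeplitz_pow_entry (n : ℕ) {f : ℂ → ℂ} (hf : AnalyticAt ℂ f 0) (hf0 : f 0 = 0)
    (a : Fin n → ℂ) (ha : ∀ k : Fin n, a k = taylorCoeff f (k.1+1)) :
    ∀ s : ℕ, 1 ≤ s → ∀ j k : Fin n,
    ((toeplitzA a) ^ s) j k
      = if (k:ℕ) < (j:ℕ) then taylorCoeff (fun z => f z ^ s) ((j:ℕ) - (k:ℕ)) else 0 := by
  intro s hs
  induction s, hs using Nat.le_induction with
  | base =>
    intro j k
    rw [pow_one]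
    simp only [toeplitzA, Matrix.of_apply]
    by_cases h : (k:ℕ) < (j:ℕ)
    · rw [dif_pos h, if_pos h, ha]
      have h1 : (j:ℕ) - (k:ℕ) - 1 + 1 = (j:ℕ) - (k:ℕ) := by omega
      simp only [h1, pow_one]
    · rw [dif_neg h, if_neg h]
  | succ s hs ih =>
    intro j k
    rw [pow_succ, Matrix.mul_apply]
    have hterm : ∀ l : Fin n, (toeplitzA a ^ s) j l * (toeplitzA a) l k
        = if (k:ℕ) < (l:ℕ) ∧ (l:ℕ) < (j:ℕ) then
            taylorCoeff (fun z => f z ^ s) ((j:ℕ)-(l:ℕ)) * taylorCoeff f ((l:ℕ)-(k:ℕ)) else 0 := by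
      intro l
      rw [ih j l]
      simp only [toeplitzA, Matrix.of_apply]
      by_cases h1 : (l:ℕ) < (j:ℕ)
      · by_cases h2 : (k:ℕ) < (l:ℕ)
        · rw [if_pos h1, dif_pos h2, if_pos ⟨h2, h1⟩, ha]
          have h3 : (l:ℕ) - (k:ℕ) - 1 + 1 = (l:ℕ) - (k:ℕ) := by omega
          rw [h3]
        · rw [dif_neg h2, mul_zero, if_neg (by tauto)]
      · rw [if_neg h1, zero_mul, if_neg (by tauto)]
    rw [Finset.sum_congr rfl (fun l _ => hterm l)]
    have hEs0 : taylorCoeff (fun z => f z ^ s) 0 = 0 :=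
      taylorCoeff_pow_eq_zero hf hf0 s 0 (by omega)
    have hCf0 : taylorCoeff f 0 = 0 := by rw [taylorCoeff_zero, hf0]
    rw [Fin.sum_univ_eq_sum_range (fun l => if (k:ℕ) < l ∧ l < (j:ℕ) then
        taylorCoeff (fun z => f z ^ s) ((j:ℕ)-l) * taylorCoeff f (l-(k:ℕ)) else 0) n]
    by_cases hkj : (k:ℕ) < (j:ℕ)
    · rw [if_pos hkj]
      have hpe : (fun z => f z ^ (s+1)) = fun z => f z ^ s * f z := by
        funext z; rw [pow_succ]
      rw [hpe, taylorCoeff_mul (hf.fun_pow s) hf]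
      have hsub : Finset.Ico ((k:ℕ)+1) (j:ℕ) ⊆ Finset.range n := by
        intro l hl
        rw [Finset.mem_Ico] at hl
        rw [Finset.mem_range]
        have := j.isLt
        omega
      rw [← Finset.sum_subset hsub (fun l _ hnl => by
            rw [Finset.mem_Ico] at hnl
            exact if_neg (by omega))]
      rw [Finset.sum_Ico_eq_sum_range]
      rw [Finset.sum_range_succ' _ ((j:ℕ)-(k:ℕ))]
      rw [hEs0, zero_mul, add_zero]
      have hd : (j:ℕ) - (k:ℕ) = ((j:ℕ)-(k:ℕ)-1)+1 := by omega
      rw [hd, Finset.sum_range_succ, Nat.sub_self, hCf0, mul_zero, add_zero]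
      set d := (j:ℕ)-(k:ℕ)-1 with hddef
      have hrefl := Finset.sum_range_reflect
        (fun i => taylorCoeff (fun z => f z ^ s) (i+1) * taylorCoeff f (d+1-(i+1))) d
      rw [← hrefl]
      rw [show (j:ℕ) - ((k:ℕ)+1) = d from by omega]
      apply Finset.sum_congr rfl
      intro i hi
      rw [Finset.mem_range] at hi
      rw [if_pos (by omega : (k:ℕ) < (k:ℕ)+1+i ∧ (k:ℕ)+1+i < (j:ℕ))]
      have e1 : (j:ℕ) - ((k:ℕ)+1+i) = d - 1 - i + 1 := by omega
      have e2 : (k:ℕ)+1+i-(k:ℕ) = i + 1 := by omega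
      have e3 : d+1-(d-1-i+1) = i + 1 := by omega
      rw [e1, e2, e3]
    · rw [if_neg hkj]
      apply Finset.sum_eq_zero
      intro l _
      exact if_neg (by omega)

lemma toeplitz_pow_mulVec (n : ℕ) {f g : ℂ → ℂ} (hf : AnalyticAt ℂ f 0) (hf0 : f 0 = 0)
    (hg : AnalyticAt ℂ g 0) (hg0 : g 0 = 0)
    (a : Fin n → ℂ) (ha : ∀ k : Fin n, a k = taylorCoeff f (k.1+1))
    (v : Fin n → ℂ) (hv : ∀ l : Fin n, v l = taylorCoeff g (n - l.1))
    (s : ℕ) (hs : 1 ≤ s) (k : Fin n) :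
    (((toeplitzA a).transpose ^ s).mulVec v) k
      = taylorCoeff (fun z => f z ^ s * g z) (n - (k:ℕ)) := by
  have hEs0 : taylorCoeff (fun z => f z ^ s) 0 = 0 :=
    taylorCoeff_pow_eq_zero hf hf0 s 0 (by omega)
  have hCg0 : taylorCoeff g 0 = 0 := by rw [taylorCoeff_zero, hg0]
  rw [← Matrix.transpose_pow]
  simp only [Matrix.mulVec, dotProduct, Matrix.transpose_apply]
  have hterm : ∀ l : Fin n, (toeplitzA a ^ s) l k * v l
      = if (k:ℕ) < (l:ℕ) then
          taylorCoeff (fun z => f z ^ s) ((l:ℕ)-(k:ℕ)) * taylorCoeff g (n - (l:ℕ)) else 0 := by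
    intro l
    rw [toeplitz_pow_entry n hf hf0 a ha s hs l k, hv]
    by_cases h : (k:ℕ) < (l:ℕ)
    · rw [if_pos h, if_pos h]
    · rw [if_neg h, if_neg h, zero_mul]
  rw [Finset.sum_congr rfl (fun l _ => hterm l)]
  rw [Fin.sum_univ_eq_sum_range (fun l => if (k:ℕ) < l then
      taylorCoeff (fun z => f z ^ s) (l-(k:ℕ)) * taylorCoeff g (n - l) else 0) n]
  rw [taylorCoeff_mul (hf.fun_pow s) hg]
  have hsub : Finset.Ico ((k:ℕ)+1) n ⊆ Finset.range n := by
    intro l hl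
    rw [Finset.mem_Ico] at hl
    rw [Finset.mem_range]
    omega
  rw [← Finset.sum_subset hsub (fun l hl hnl => by
        rw [Finset.mem_Ico] at hnl
        rw [Finset.mem_range] at hl
        exact if_neg (by omega))]
  rw [Finset.sum_Ico_eq_sum_range]
  rw [Finset.sum_range_succ' _ (n-(k:ℕ))]
  rw [hEs0, zero_mul, add_zero]
  have hkn := k.isLt
  have hd : n - (k:ℕ) = (n-(k:ℕ)-1)+1 := by omega
  rw [hd, Finset.sum_range_succ, Nat.sub_self, hCg0, mul_zero, add_zero]
  rw [show n - ((k:ℕ)+1) = n-(k:ℕ)-1 from by omega]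
  apply Finset.sum_congr rfl
  intro i hi
  rw [Finset.mem_range] at hi
  rw [if_pos (by omega : (k:ℕ) < (k:ℕ)+1+i)]
  have e1 : (k:ℕ)+1+i-(k:ℕ) = i+1 := by omega
  have e2 : n - ((k:ℕ)+1+i) = n-(k:ℕ)-1+1-(i+1) := by omega
  rw [e1, e2]

end Chunk4

namespace Chunk5
open AdjAux Chunk2 Chunk3 Chunk4 Set

lemma ode_unique_icc {n : ℕ} {T : ℝ} (hT : 0 ≤ T) {v : ℝ → (Fin n → ℂ) → (Fin n → ℂ)}
    {K : NNReal} (hv : ∀ t, LipschitzWith K (v t))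
    {f g : ℝ → Fin n → ℂ}
    (hf : ContinuousOn f (Set.Icc 0 T))
    (hf' : ∀ t ∈ Set.Icc (0:ℝ) T, HasDerivWithinAt f (v t (f t)) (Set.Icc 0 T) t)
    (hg : ContinuousOn g (Set.Icc 0 T))
    (hg' : ∀ t ∈ Set.Icc (0:ℝ) T, HasDerivWithinAt g (v t (g t)) (Set.Icc 0 T) t)
    (hend : f T = g T) : Set.EqOn f g (Set.Icc 0 T) := by
  have hmem : ∀ t ∈ Set.Ioc (0:ℝ) T, Set.Icc (0:ℝ) T ∈ nhdsWithin t (Set.Iic t) := by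
    intro t ht
    apply mem_nhdsWithin.2
    exact ⟨Set.Ioi 0, isOpen_Ioi, ht.1, fun x hx => ⟨le_of_lt hx.1, le_trans hx.2 ht.2⟩⟩
  exact ODE_solution_unique_of_mem_Icc_left (s := fun _ => Set.univ)
    (fun t _ => (hv t).lipschitzOnWith)
    hf (fun t ht => (hf' t (Set.Ioc_subset_Icc_self ht)).mono_of_mem_nhdsWithin (hmem t ht))
    (fun _ _ => Set.mem_univ _)
    hg (fun t ht => (hg' t (Set.Ioc_subset_Icc_self ht)).mono_of_mem_nhdsWithin (hmem t ht))
    (fun _ _ => Set.mem_univ _) hend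

lemma pow_entry_bound {n : ℕ} (C : ℝ) (hC : 0 ≤ C) (A : Matrix (Fin n) (Fin n) ℂ)
    (hA : ∀ j k, ‖A j k‖ ≤ C) (s : ℕ) :
    ∀ j k, ‖(A ^ s) j k‖ ≤ ((n:ℝ)*C+1)^s := by
  have hb : (0:ℝ) ≤ (n:ℝ)*C+1 := by positivity
  induction s with
  | zero =>
    intro j k
    rw [pow_zero, pow_zero, Matrix.one_apply]
    split <;> simp
  | succ s ih =>
    intro j k
    rw [pow_succ, Matrix.mul_apply]
    calc ‖∑ l, (A^s) j l * A l k‖ ≤ ∑ l, ‖(A^s) j l * A l k‖ := norm_sum_le _ _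
      _ ≤ ∑ _l : Fin n, ((n:ℝ)*C+1)^s * C := by
          apply Finset.sum_le_sum
          intro l _
          rw [norm_mul]
          exact mul_le_mul (ih j l) (hA l k) (norm_nonneg _) (by positivity)
      _ = (n:ℝ) * (((n:ℝ)*C+1)^s * C) := by
          rw [Finset.sum_const, Finset.card_univ, Fintype.card_fin, nsmul_eq_mul]
      _ ≤ ((n:ℝ)*C+1)^(s+1) := by
          rw [pow_succ]
          have h1 : (n:ℝ) * (((n:ℝ)*C+1)^s * C) = (((n:ℝ)*C+1)^s) * ((n:ℝ)*C) := by ring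
          rw [h1]
          apply mul_le_mul_of_nonneg_left _ (by positivity)
          linarith

lemma mulVec_bound {n : ℕ} (B : ℝ) (M : Matrix (Fin n) (Fin n) ℂ)
    (hM : ∀ j k, ‖M j k‖ ≤ B) (x : Fin n → ℂ) (k : Fin n) :
    ‖M.mulVec x k‖ ≤ (n:ℝ) * B * ‖x‖ := by
  simp only [Matrix.mulVec, dotProduct]
  calc ‖∑ l, M k l * x l‖ ≤ ∑ l, ‖M k l * x l‖ := norm_sum_le _ _
    _ ≤ ∑ _l : Fin n, B * ‖x‖ := by
        apply Finset.sum_le_sum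
        intro l _
        rw [norm_mul]
        exact mul_le_mul (hM k l) (norm_le_pi_norm x l) (norm_nonneg _)
          (le_trans (norm_nonneg _) (hM k l))
    _ = (n:ℝ) * B * ‖x‖ := by
        rw [Finset.sum_const, Finset.card_univ, Fintype.card_fin, nsmul_eq_mul]
        ring

lemma exp_norm_one (s : ℕ) (r : ℝ) : ‖Complex.exp (-(s:ℂ)*(r:ℂ)*Complex.I)‖ = 1 := by
  rw [show (-(s:ℂ))*(r:ℂ) = ((-(s:ℝ)*r : ℝ) : ℂ) from by push_cast; ring]
  exact Complex.norm_exp_ofReal_mul_I _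

end Chunk5
open AdjAux Chunk2 Chunk3 Chunk4 Chunk5


set_option maxHeartbeats 1000000 in
/-- Theorem 1: along the Löwner flow `∂w/∂t = -w(e^{iu(t)}+w)/(e^{iu(t)}-w)`
on `[0,T]`, if `q` solves the adjoint system with terminal value `q(T) = β`, then
`q_k(t) = c_{n-k+1}(t)` where `c_j(t)` is the `j`-th Taylor coefficient of
`z ↦ (β_n z + ⋯ + β_1 zⁿ)·∂_z w(z,T)/∂_z w(z,t)`. -/
theorem adjoint_solution_eq_taylorCoeff
    (n : ℕ) (hn : 1 ≤ n) (T : ℝ) (hT : 0 ≤ T)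
    (u : ℝ → ℝ) (hu : ContinuousOn u (Set.Icc 0 T))
    (w : ℂ → ℝ → ℂ)
    (hinit : ∀ z ∈ ball (0 : ℂ) 1, w z 0 = z)
    (hol : ∀ t ∈ Set.Icc (0 : ℝ) T, DifferentiableOn ℂ (fun z => w z t) (ball (0 : ℂ) 1))
    (hbd : ∀ t ∈ Set.Icc (0 : ℝ) T, ∀ z ∈ ball (0 : ℂ) 1, ‖w z t‖ < 1)
    (h0 : ∀ t ∈ Set.Icc (0 : ℝ) T, w 0 t = 0)
    (hnz : ∀ t ∈ Set.Icc (0 : ℝ) T, ∀ z ∈ ball (0 : ℂ) 1, deriv (fun z => w z t) z ≠ 0)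
    (hode : ∀ z ∈ ball (0 : ℂ) 1, ∀ t ∈ Set.Icc (0 : ℝ) T,
      HasDerivWithinAt (fun s => w z s) (-(w z t) * lkernel (w z t) (u t)) (Set.Icc 0 T) t)
    (acoef : ℝ → Fin n → ℂ)
    (hacoef : ∀ t, ∀ k : Fin n, acoef t k = taylorCoeff (fun z => w z t) (k.1 + 1))
    (hadiff : ∀ k : ℕ, ∀ t ∈ Set.Icc (0 : ℝ) T,
      HasDerivWithinAt (fun s => taylorCoeff (fun z => w z s) k)
        (taylorCoeff (fun z => -(w z t) * lkernel (w z t) (u t)) k) (Set.Icc 0 T) t)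
    (hqdiff : ∀ k : ℕ, ∀ t ∈ Set.Icc (0 : ℝ) T,
      HasDerivWithinAt (fun s => taylorCoeff (fun z => z / deriv (fun z => w z s) z) k)
        (taylorCoeff (fun z => (z / deriv (fun z => w z t) z) *
          (lkernel (w z t) (u t) +
            2 * Complex.exp ((u t : ℂ) * Complex.I) * w z t /
              (Complex.exp ((u t : ℂ) * Complex.I) - w z t) ^ 2)) k) (Set.Icc 0 T) t)
    (β : Fin n → ℂ) (q : ℝ → Fin n → ℂ)
    (hq : ∀ t ∈ Set.Icc (0 : ℝ) T, ∀ k : Fin n,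
      HasDerivWithinAt (fun s => q s k)
        (q t k + 2 * ∑ s ∈ Finset.Icc 1 (n - 1),
          Complex.exp (-(s : ℂ) * (u t : ℂ) * Complex.I) * ((s : ℂ) + 1) *
            (((toeplitzA (acoef t)).transpose ^ s).mulVec (q t)) k) (Set.Icc 0 T) t)
    (hqT : q T = β) :
    ∀ t ∈ Set.Icc (0 : ℝ) T, ∀ k : Fin n,
      q t k = taylorCoeff (fun z =>
        (∑ i : Fin n, β i * z ^ (n - i.1)) * deriv (fun z => w z T) z /
          deriv (fun z => w z t) z) (n - k.1) := by
  have h0mem : (0:ℂ) ∈ ball (0 : ℂ) 1 := mem_ball_self one_pos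
  have hball : ball (0 : ℂ) 1 ∈ nhds (0:ℂ) := ball_mem_nhds 0 one_pos
  have hTmem : T ∈ Set.Icc (0:ℝ) T := ⟨hT, le_rfl⟩
  have hAw : ∀ t ∈ Set.Icc (0:ℝ) T, AnalyticAt ℂ (fun z => w z t) 0 :=
    fun t ht => (hol t ht).analyticAt hball
  have hAw' : ∀ t ∈ Set.Icc (0:ℝ) T, AnalyticAt ℂ (deriv (fun z => w z t)) 0 :=
    fun t ht => analyticAt_deriv (hAw t ht)
  have hw'0 : ∀ t ∈ Set.Icc (0:ℝ) T, deriv (fun z => w z t) 0 ≠ 0 :=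
    fun t ht => hnz t ht 0 h0mem
  have hAψ : ∀ t ∈ Set.Icc (0:ℝ) T,
      AnalyticAt ℂ (fun z => z / deriv (fun z' => w z' t) z) 0 :=
    fun t ht => AnalyticAt.div analyticAt_id (hAw' t ht) (hw'0 t ht)
  -- local definitions
  set Pt : ℂ → ℂ := fun z => ∑ i : Fin n, β i * z ^ (n - i.1 - 1) with hPtdef
  set G : ℂ → ℂ := fun z => Pt z * deriv (fun z' => w z' T) z with hGdef
  set c : ℝ → ℕ → ℂ := fun t j => ∑ m ∈ Finset.range (j+1),
      taylorCoeff G m * taylorCoeff (fun z => z / deriv (fun z' => w z' t) z) (j-m) with hcdef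
  have hAP : AnalyticAt ℂ Pt 0 :=
    Finset.analyticAt_fun_sum _ (fun i _ => analyticAt_const.mul (analyticAt_id.pow _))
  have hAG : AnalyticAt ℂ G 0 := hAP.mul (hAw' T hTmem)
  have hAFc : ∀ t ∈ Set.Icc (0:ℝ) T,
      AnalyticAt ℂ (fun z => G z * (z / deriv (fun z' => w z' t) z)) 0 :=
    fun t ht => hAG.mul (hAψ t ht)
  have hFc0 : ∀ t : ℝ, (fun z => G z * (z / deriv (fun z' => w z' t) z)) 0 = 0 := by
    intro t
    simp
  have hP : ∀ z : ℂ, (∑ i : Fin n, β i * z ^ (n - i.1)) = z * Pt z := by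
    intro z
    rw [hPtdef]
    simp only []
    rw [Finset.mul_sum]
    apply Finset.sum_congr rfl
    intro i _
    have hz : z ^ (n - i.1) = z * z ^ (n - i.1 - 1) := by
      rw [← pow_succ']
      congr 1
      have := i.isLt
      omega
    rw [hz]
    ring
  have hFeq : ∀ t : ℝ, (fun z => (∑ i : Fin n, β i * z ^ (n - i.1)) *
        deriv (fun z => w z T) z / deriv (fun z => w z t) z)
      = fun z => G z * (z / deriv (fun z' => w z' t) z) := by
    intro t
    funext z
    rw [hP z, hGdef]
    simp only []
    ring
  have hceq : ∀ t ∈ Set.Icc (0:ℝ) T, ∀ j : ℕ,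
      taylorCoeff (fun z => G z * (z / deriv (fun z' => w z' t) z)) j = c t j := by
    intro t ht j
    rw [taylorCoeff_mul hAG (hAψ t ht), hcdef]
  -- derivative of c
  have hcD : ∀ t ∈ Set.Icc (0:ℝ) T, ∀ j : ℕ, HasDerivWithinAt (fun s => c s j)
      (∑ m ∈ Finset.range (j+1), taylorCoeff G m *
        taylorCoeff (fun z => (z / deriv (fun z => w z t) z) *
          (lkernel (w z t) (u t) +
            2 * Complex.exp ((u t : ℂ) * Complex.I) * w z t /
              (Complex.exp ((u t : ℂ) * Complex.I) - w z t) ^ 2)) (j-m))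
      (Set.Icc 0 T) t := by
    intro t ht j
    simp only [hcdef]
    apply HasDerivWithinAt.fun_sum
    intro m _
    exact (hqdiff (j-m) t ht).const_mul _
  -- KEY computation
  have hDval : ∀ t ∈ Set.Icc (0:ℝ) T, ∀ k : Fin n,
      (∑ m ∈ Finset.range (n - k.1 + 1), taylorCoeff G m *
        taylorCoeff (fun z => (z / deriv (fun z => w z t) z) *
          (lkernel (w z t) (u t) +
            2 * Complex.exp ((u t : ℂ) * Complex.I) * w z t /
              (Complex.exp ((u t : ℂ) * Complex.I) - w z t) ^ 2)) (n - k.1 - m))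
      = c t (n - k.1) + 2 * ∑ s ∈ Finset.Icc 1 (n - 1),
          Complex.exp (-(s:ℂ) * (u t : ℂ) * Complex.I) * ((s:ℂ) + 1) *
            (((toeplitzA (acoef t)).transpose ^ s).mulVec (fun l : Fin n => c t (n - l.1))) k := by
    intro t ht k
    have hkn := k.isLt
    have hj1 : 1 ≤ n - k.1 := by omega
    set e : ℂ := Complex.exp ((u t : ℂ) * Complex.I) with hedef
    have he0 : e ≠ 0 := Complex.exp_ne_zero _
    have habs : ‖e‖ = 1 := by
      rw [hedef]
      exact Complex.norm_exp_ofReal_mul_I (u t)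
    have hfb : ∀ᶠ z in nhds (0:ℂ), ‖w z t‖ < 1 := by
      filter_upwards [hball] with z hz using hbd t ht z hz
    have hAψM : AnalyticAt ℂ (fun z => (z / deriv (fun z => w z t) z) *
        (lkernel (w z t) (u t) + 2 * e * w z t / (e - w z t) ^ 2)) 0 := by
      have h1 : AnalyticAt ℂ (fun z => (e + w z t)/(e - w z t)) 0 := by
        apply (analyticAt_const.add (hAw t ht)).div (analyticAt_const.sub (hAw t ht))
        show e - w 0 t ≠ 0
        rw [h0 t ht, sub_zero]
        exact he0
      have h2 : AnalyticAt ℂ (fun z => 2 * e * w z t / (e - w z t) ^ 2) 0 := by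
        apply (analyticAt_const.mul (hAw t ht)).div ((analyticAt_const.sub (hAw t ht)).pow 2)
        show (e - w 0 t)^2 ≠ 0
        rw [h0 t ht, sub_zero]
        exact pow_ne_zero 2 he0
      exact (hAψ t ht).mul (h1.add h2)
    have e1 : (∑ m ∈ Finset.range (n - k.1 + 1), taylorCoeff G m *
        taylorCoeff (fun z => (z / deriv (fun z => w z t) z) *
          (lkernel (w z t) (u t) + 2 * e * w z t / (e - w z t) ^ 2)) (n - k.1 - m))
        = taylorCoeff (fun z => G z * ((z / deriv (fun z => w z t) z) *
            (lkernel (w z t) (u t) + 2 * e * w z t / (e - w z t) ^ 2))) (n - k.1) :=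
      (taylorCoeff_mul hAG hAψM (n - k.1)).symm
    rw [e1]
    have hfneq : (fun z => G z * ((z / deriv (fun z => w z t) z) *
          (lkernel (w z t) (u t) + 2 * e * w z t / (e - w z t) ^ 2)))
        = fun z => (G z * (z / deriv (fun z' => w z' t) z)) *
            ((e + w z t)/(e - w z t) + 2*e*(w z t)/(e - w z t)^2) := by
      funext z
      simp only [lkernel, ← hedef]
      ring
    rw [hfneq]
    rw [key_expand habs (hAw t ht) (h0 t ht) hfb (hAFc t ht) (hFc0 t) (n - k.1) hj1]
    rw [hceq t ht (n - k.1)]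
    congr 1
    congr 1
    have hexp : ∀ s : ℕ, (e⁻¹)^s = Complex.exp (-(s:ℂ)*(u t : ℂ)*Complex.I) := by
      intro s
      rw [hedef, ← Complex.exp_neg, ← Complex.exp_nat_mul]
      congr 1
      push_cast
      ring
    have hsub : Finset.Icc 1 (n - k.1 - 1) ⊆ Finset.Icc 1 (n-1) := by
      intro s hs
      rw [Finset.mem_Icc] at *
      omega
    rw [Finset.sum_subset hsub (fun s hs hns => by
        rw [Finset.mem_Icc] at hs
        rw [Finset.mem_Icc] at hns
        rw [taylorCoeff_pow_mul_eq_zero (hAw t ht) (h0 t ht) (hAFc t ht) (hFc0 t)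
          s (n - k.1) (by omega)]
        ring)]
    apply Finset.sum_congr rfl
    intro s hs
    rw [Finset.mem_Icc] at hs
    rw [toeplitz_pow_mulVec n (hAw t ht) (h0 t ht) (hAFc t ht) (hFc0 t)
      (acoef t) (fun k' => hacoef t k') (fun l : Fin n => c t (n - l.1))
      (fun l => (hceq t ht (n - l.1)).symm) s hs.1 k]
    rw [hexp s]
    ring
  -- terminal condition
  have hcT : ∀ k : Fin n, c T (n - k.1) = β k := by
    intro k
    rw [← hceq T hTmem (n - k.1)]
    have hFT : (fun z => G z * (z / deriv (fun z' => w z' T) z)) =ᶠ[nhds (0:ℂ)]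
        (fun z => ∑ i : Fin n, β i * z ^ (n - i.1)) := by
      filter_upwards [hball] with z hz
      have hD := hnz T hTmem z hz
      have hz1 : G z * (z / deriv (fun z' => w z' T) z) = z * Pt z := by
        rw [hGdef]
        simp only []
        field_simp
      rw [hz1, ← hP z]
    rw [taylorCoeff_congr hFT]
    rw [taylorCoeff_finsum Finset.univ (fun i => fun z => β i * z ^ (n - i.1))
        (fun i _ => analyticAt_const.mul (analyticAt_id.pow _))]
    rw [Finset.sum_congr rfl (fun i _ => by
        rw [taylorCoeff_const_mul
          (by exact analyticAt_id.pow _ : AnalyticAt ℂ (fun z : ℂ => z ^ (n - i.1)) 0),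
          taylorCoeff_monomial])]
    have hsummand : ∀ i ∈ Finset.univ, β i * (if n - k.1 = n - i.1 then (1:ℂ) else 0)
        = if i = k then β i else 0 := by
      intro i _
      by_cases hik : i = k
      · subst hik
        simp
      · have hni : ¬ (n - k.1 = n - i.1) := by
          have h1 := i.isLt
          have h2 := k.isLt
          intro h
          exact hik (Fin.ext (by omega))
        rw [if_neg hni, if_neg hik, mul_zero]
    rw [Finset.sum_congr rfl hsummand, Finset.sum_ite_eq' Finset.univ k (fun i => β i)]
    simp
  -- time clamp and vector field
  set τ : ℝ → ℝ := fun t => max 0 (min t T) with hτdef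
  have hτmem : ∀ t, τ t ∈ Set.Icc (0:ℝ) T := by
    intro t
    exact ⟨le_max_left _ _, max_le hT (min_le_right _ _)⟩
  have hτid : ∀ t ∈ Set.Icc (0:ℝ) T, τ t = t := by
    intro t ht
    rw [hτdef]
    simp only []
    rw [min_eq_left ht.2, max_eq_right ht.1]
  set v : ℝ → (Fin n → ℂ) → (Fin n → ℂ) := fun t x k => x k + 2 * ∑ s ∈ Finset.Icc 1 (n - 1),
      Complex.exp (-(s:ℂ) * (u (τ t) : ℂ) * Complex.I) * ((s:ℂ) + 1) *
        (((toeplitzA (acoef (τ t))).transpose ^ s).mulVec x) k with hvdef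
  set qtf : ℝ → Fin n → ℂ := fun t k => c t (n - k.1) with hqtfdef
  -- bound on coefficients
  have hkcont : ∀ k : Fin n, ContinuousOn (fun t => acoef t k) (Set.Icc 0 T) := by
    intro k
    have hfn : (fun t => acoef t k) = fun t => taylorCoeff (fun z => w z t) (k.1+1) :=
      funext (fun t => hacoef t k)
    rw [hfn]
    intro t ht
    exact (hadiff (k.1+1) t ht).continuousWithinAt
  obtain ⟨C0, hC0⟩ := isCompact_Icc.exists_bound_of_continuousOn
    (continuousOn_pi.2 hkcont)
  set C : ℝ := max C0 0 with hCdef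
  have hC : 0 ≤ C := le_max_right _ _
  have hCa : ∀ t : ℝ, ∀ j k : Fin n, ‖(toeplitzA (acoef (τ t))).transpose j k‖ ≤ C := by
    intro t j k
    simp only [Matrix.transpose_apply, toeplitzA, Matrix.of_apply]
    split
    · calc ‖acoef (τ t) _‖ ≤ ‖acoef (τ t)‖ := norm_le_pi_norm _ _
        _ ≤ C0 := hC0 _ (hτmem t)
        _ ≤ C := le_max_left _ _
    · simpa using hC
  set K' : ℝ := 1 + 2 * ∑ s ∈ Finset.Icc 1 (n-1), ((s:ℝ)+1) * ((n:ℝ) * ((n:ℝ)*C+1)^s)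
    with hK'def
  have hK'0 : 0 ≤ K' := by
    rw [hK'def]
    have : ∀ s ∈ Finset.Icc 1 (n-1), (0:ℝ) ≤ ((s:ℝ)+1) * ((n:ℝ) * ((n:ℝ)*C+1)^s) := by
      intro s _
      positivity
    have h2 := Finset.sum_nonneg this
    linarith
  have hLip : ∀ t : ℝ, LipschitzWith K'.toNNReal (v t) := by
    intro t
    apply LipschitzWith.of_dist_le_mul
    intro x y
    rw [Real.coe_toNNReal _ hK'0, dist_eq_norm, dist_eq_norm]
    apply (pi_norm_le_iff_of_nonneg (mul_nonneg hK'0 (norm_nonneg _))).2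
    intro k
    have hdiff : (v t x - v t y) k = (x k - y k) + 2 * ∑ s ∈ Finset.Icc 1 (n - 1),
        Complex.exp (-(s:ℂ) * (u (τ t) : ℂ) * Complex.I) * ((s:ℂ) + 1) *
          (((toeplitzA (acoef (τ t))).transpose ^ s).mulVec (x - y)) k := by
      simp only [Pi.sub_apply, hvdef, Matrix.mulVec_sub, mul_sub, Finset.sum_sub_distrib]
      ring
    rw [hdiff]
    have hterm : ∀ s ∈ Finset.Icc 1 (n-1),
        ‖Complex.exp (-(s:ℂ) * (u (τ t) : ℂ) * Complex.I) * ((s:ℂ) + 1) *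
          (((toeplitzA (acoef (τ t))).transpose ^ s).mulVec (x - y)) k‖
        ≤ ((s:ℝ)+1) * ((n:ℝ) * ((n:ℝ)*C+1)^s) * ‖x - y‖ := by
      intro s _
      rw [norm_mul, norm_mul, exp_norm_one, one_mul]
      have hs1 : ‖((s:ℂ)+1)‖ = (s:ℝ)+1 := by
        rw [show ((s:ℂ)+1) = (((s+1:ℕ)):ℂ) from by push_cast; ring]
        rw [Complex.norm_natCast]
        push_cast
        ring
      rw [hs1]
      have hmv := mulVec_bound (((n:ℝ)*C+1)^s) ((toeplitzA (acoef (τ t))).transpose ^ s)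
        (pow_entry_bound C hC _ (hCa t) s) (x - y) k
      calc ((s:ℝ)+1) * ‖(((toeplitzA (acoef (τ t))).transpose ^ s).mulVec (x - y)) k‖
          ≤ ((s:ℝ)+1) * ((n:ℝ) * ((n:ℝ)*C+1)^s * ‖x - y‖) := by
            apply mul_le_mul_of_nonneg_left hmv (by positivity)
        _ = ((s:ℝ)+1) * ((n:ℝ) * ((n:ℝ)*C+1)^s) * ‖x - y‖ := by ring
    calc ‖(x k - y k) + 2 * ∑ s ∈ Finset.Icc 1 (n - 1),
        Complex.exp (-(s:ℂ) * (u (τ t) : ℂ) * Complex.I) * ((s:ℂ) + 1) *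
          (((toeplitzA (acoef (τ t))).transpose ^ s).mulVec (x - y)) k‖
        ≤ ‖x k - y k‖ + ‖(2:ℂ)‖ * ‖∑ s ∈ Finset.Icc 1 (n - 1),
            Complex.exp (-(s:ℂ) * (u (τ t) : ℂ) * Complex.I) * ((s:ℂ) + 1) *
              (((toeplitzA (acoef (τ t))).transpose ^ s).mulVec (x - y)) k‖ := by
          rw [← norm_mul]
          exact norm_add_le _ _
      _ ≤ ‖x - y‖ + 2 * ∑ s ∈ Finset.Icc 1 (n-1),
            ((s:ℝ)+1) * ((n:ℝ) * ((n:ℝ)*C+1)^s) * ‖x - y‖ := by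
          apply add_le_add
          · exact norm_le_pi_norm (x - y) k
          · rw [show ‖(2:ℂ)‖ = 2 from by norm_num]
            apply mul_le_mul_of_nonneg_left _ (by norm_num)
            exact le_trans (norm_sum_le _ _) (Finset.sum_le_sum hterm)
      _ = K' * ‖x - y‖ := by
          rw [hK'def, ← Finset.sum_mul]
          ring
  -- solutions
  have hq' : ∀ t ∈ Set.Icc (0:ℝ) T, HasDerivWithinAt q (v t (q t)) (Set.Icc 0 T) t := by
    intro t ht
    apply hasDerivWithinAt_pi.2
    intro k
    have hval : (v t (q t)) k = q t k + 2 * ∑ s ∈ Finset.Icc 1 (n - 1),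
        Complex.exp (-(s:ℂ) * (u t : ℂ) * Complex.I) * ((s:ℂ) + 1) *
          (((toeplitzA (acoef t)).transpose ^ s).mulVec (q t)) k := by
      simp only [hvdef]
      rw [hτid t ht]
    rw [hval]
    exact hq t ht k
  have hqt' : ∀ t ∈ Set.Icc (0:ℝ) T, HasDerivWithinAt qtf (v t (qtf t)) (Set.Icc 0 T) t := by
    intro t ht
    apply hasDerivWithinAt_pi.2
    intro k
    have hval : (v t (qtf t)) k = c t (n - k.1) + 2 * ∑ s ∈ Finset.Icc 1 (n - 1),
        Complex.exp (-(s:ℂ) * (u t : ℂ) * Complex.I) * ((s:ℂ) + 1) *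
          (((toeplitzA (acoef t)).transpose ^ s).mulVec (fun l : Fin n => c t (n - l.1))) k := by
      simp only [hvdef, hqtfdef]
      rw [hτid t ht]
    rw [hval]
    have hD := hcD t ht (n - k.1)
    rw [hDval t ht k] at hD
    exact hD
  have hqcont : ContinuousOn q (Set.Icc 0 T) :=
    continuousOn_pi.2 (fun k t ht => (hq t ht k).continuousWithinAt)
  have hqtcont : ContinuousOn qtf (Set.Icc 0 T) :=
    continuousOn_pi.2 (fun k t ht => (hcD t ht (n - k.1)).continuousWithinAt)
  have hend : q T = qtf T := by
    funext k
    rw [hqT, hqtfdef]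
    exact (hcT k).symm
  have hEq := ode_unique_icc hT hLip hqcont hq' hqtcont hqt' hend
  intro t ht k
  rw [hFeq t, hceq t ht (n - k.1)]
  exact congrFun (hEq ht) k
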